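/- Let τ* : [0,1] → [0,1] be continuously differentiable with τ*(0) = 0, τ*(1) = 1, and suppose F(τ*(t)) = t for every t ∈ [0,1] (i.e., τ* = F⁻¹). Then for every admissible reparameterization τ : [0,1] → [0,1] one has J(τ*) ≤ J(τ); that is, τ* = F⁻¹ is a global minimizer of the functional J over all admissible reparameterizations. (Theorem 1 of the paper.) -/

import Mathlib

open Set intervalIntegral MeasureTheory

/-- **Theorem 1 (GORA, global optimality).**
If `τ*` is continuously differentiable on `[0,1]` with `τ*(0) = 0`, `τ*(1) = 1`, and
`F (τ*(t)) = t` for all `t ∈ [0,1]` (i.e. `τ* = F⁻¹`), then for every admissible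
reparameterization `τ`, `J(τ*) ≤ J(τ)`. -/
theorem gora_global_minimizer
    (𝔤 : ℝ → ℝ)
    (h𝔤_cont : ContinuousOn 𝔤 (Set.Icc 0 1))
    (h𝔤_pos : ∀ σ ∈ Set.Icc (0:ℝ) 1, 0 < 𝔤 σ)
    (F : ℝ → ℝ)
    (hF : ∀ s, F s =
      (∫ σ in (0:ℝ)..s, Real.sqrt (𝔤 σ)) / (∫ σ in (0:ℝ)..1, Real.sqrt (𝔤 σ)))
    (τstar τstar' : ℝ → ℝ)
    (hτstar_maps : Set.MapsTo τstar (Set.Icc 0 1) (Set.Icc 0 1))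
    (hτstar_deriv : ∀ t ∈ Set.Icc (0:ℝ) 1, HasDerivWithinAt τstar (τstar' t) (Set.Icc 0 1) t)
    (hτstar'_cont : ContinuousOn τstar' (Set.Icc 0 1))
    (hτstar0 : τstar 0 = 0) (hτstar1 : τstar 1 = 1)
    (hτstar_inv : ∀ t ∈ Set.Icc (0:ℝ) 1, F (τstar t) = t) :
    ∀ τ τ' : ℝ → ℝ,
      Set.MapsTo τ (Set.Icc 0 1) (Set.Icc 0 1) →
      (∀ t ∈ Set.Icc (0:ℝ) 1, HasDerivWithinAt τ (τ' t) (Set.Icc 0 1) t) →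
      ContinuousOn τ' (Set.Icc 0 1) →
      (∀ t ∈ Set.Icc (0:ℝ) 1, 0 ≤ τ' t) →
      τ 0 = 0 → τ 1 = 1 →
      (∫ t in (0:ℝ)..1, 𝔤 (τstar t) * (τstar' t) ^ 2)
        ≤ ∫ t in (0:ℝ)..1, 𝔤 (τ t) * (τ' t) ^ 2 := by
  intro τ τ' hτ_maps hτ_deriv hτ'_cont hτ'_nonneg hτ0 hτ1
  have h01 : (0:ℝ) ≤ 1 := by norm_num
  have huIcc : Set.uIcc (0:ℝ) 1 = Set.Icc 0 1 := Set.uIcc_of_le h01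
  set c : ℝ := ∫ σ in (0:ℝ)..1, Real.sqrt (𝔤 σ) with hc_def
  have hsq_cont : ContinuousOn (fun σ => Real.sqrt (𝔤 σ)) (Set.Icc 0 1) := h𝔤_cont.sqrt
  have hsq_int : IntervalIntegrable (fun σ => Real.sqrt (𝔤 σ)) volume 0 1 :=
    (huIcc ▸ hsq_cont).intervalIntegrable
  have hc_pos : 0 < c :=
    intervalIntegral.intervalIntegral_pos_of_pos_on hsq_int
      (fun x hx => Real.sqrt_pos.mpr (h𝔤_pos x (Set.Ioo_subset_Icc_self hx))) one_pos
  -- the clamping projection onto [0,1]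
  set p : ℝ → ℝ := fun x => min 1 (max 0 x) with hp_def
  have hp_mem : ∀ x, p x ∈ Set.Icc (0:ℝ) 1 :=
    fun x => ⟨le_min zero_le_one (le_max_left 0 x), min_le_left _ _⟩
  have hp_eq : ∀ x ∈ Set.Icc (0:ℝ) 1, p x = x := by
    intro x hx
    simp only [hp_def, max_eq_right hx.1, min_eq_right hx.2]
  have hp_cont : Continuous p := continuous_const.min (continuous_const.max continuous_id)
  have hq_cont : Continuous (fun x => Real.sqrt (𝔤 (p x))) :=
    (h𝔤_cont.sqrt).comp_continuous hp_cont hp_mem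
  set G : ℝ → ℝ := fun s => ∫ x in (0:ℝ)..s, Real.sqrt (𝔤 (p x)) with hG_def
  have hG_deriv : ∀ s : ℝ, HasDerivAt G (Real.sqrt (𝔤 (p s))) s := fun s =>
    intervalIntegral.integral_hasDerivAt_right (hq_cont.intervalIntegrable 0 s)
      (hq_cont.stronglyMeasurableAtFilter volume (nhds s)) hq_cont.continuousAt
  have hG_eq : ∀ s ∈ Set.Icc (0:ℝ) 1, G s = ∫ x in (0:ℝ)..s, Real.sqrt (𝔤 x) := by
    intro s hs
    refine intervalIntegral.integral_congr ?_
    intro x hx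
    have hx' : x ∈ Set.Icc (0:ℝ) 1 :=
      Set.uIcc_subset_Icc (Set.left_mem_Icc.mpr h01) hs hx
    simp [hp_eq x hx']
  -- key identity for τstar
  have hkey : ∀ t ∈ Set.Icc (0:ℝ) 1, Real.sqrt (𝔤 (τstar t)) * τstar' t = c := by
    intro t ht
    have hmem := hτstar_maps ht
    have hcomp : HasDerivWithinAt (fun u => G (τstar u))
        (Real.sqrt (𝔤 (p (τstar t))) * τstar' t) (Set.Icc 0 1) t :=
      (hG_deriv (τstar t)).comp_hasDerivWithinAt t (hτstar_deriv t ht)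
    have heq : ∀ u ∈ Set.Icc (0:ℝ) 1, G (τstar u) = c * u := by
      intro u hu
      have h2 := hτstar_inv u hu
      rw [hF] at h2
      have h3 : (∫ x in (0:ℝ)..τstar u, Real.sqrt (𝔤 x)) = u * c :=
        (div_eq_iff hc_pos.ne').mp h2
      rw [hG_eq _ (hτstar_maps hu), h3, mul_comm]
    have hlin : HasDerivWithinAt (fun u : ℝ => c * u) c (Set.Icc 0 1) t := by
      simpa using ((hasDerivAt_id t).const_mul c).hasDerivWithinAt
    have h4 : HasDerivWithinAt (fun u => G (τstar u)) c (Set.Icc 0 1) t :=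
      hlin.congr (fun u hu => (heq u hu)) (heq t ht)
    have hud : UniqueDiffWithinAt ℝ (Set.Icc (0:ℝ) 1) t := (uniqueDiffOn_Icc one_pos) t ht
    have h5 : Real.sqrt (𝔤 (p (τstar t))) * τstar' t = c := by
      rw [← hcomp.derivWithin hud, ← h4.derivWithin hud]
    rwa [hp_eq _ hmem] at h5
  have hsq_key : ∀ t ∈ Set.Icc (0:ℝ) 1, 𝔤 (τstar t) * (τstar' t) ^ 2 = c ^ 2 := by
    intro t ht
    have h1 : (0:ℝ) ≤ 𝔤 (τstar t) := (h𝔤_pos _ (hτstar_maps ht)).le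
    have h2 := hkey t ht
    calc 𝔤 (τstar t) * (τstar' t) ^ 2
        = (Real.sqrt (𝔤 (τstar t)) * τstar' t) ^ 2 := by
          rw [mul_pow, Real.sq_sqrt h1]
      _ = c ^ 2 := by rw [h2]
  have hJstar : (∫ t in (0:ℝ)..1, 𝔤 (τstar t) * (τstar' t) ^ 2) = c ^ 2 := by
    rw [intervalIntegral.integral_congr (g := fun _ => c ^ 2)
      (fun t ht => hsq_key t (huIcc ▸ ht))]
    simp
  -- change of variables for τ
  have hτ_cont : ContinuousOn τ (Set.Icc 0 1) :=
    fun t ht => (hτ_deriv t ht).continuousWithinAt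
  have hCoV : (∫ t in (0:ℝ)..1, τ' t * Real.sqrt (𝔤 (τ t))) = c := by
    have h := intervalIntegral.integral_comp_smul_deriv'' (a := 0) (b := 1)
      (f := τ) (f' := τ') (g := fun u => Real.sqrt (𝔤 u))
      (huIcc ▸ hτ_cont)
      (by
        intro x hx
        have hx' : x ∈ Set.Ioo (0:ℝ) 1 := by simpa using hx
        exact (hτ_deriv x (Set.Ioo_subset_Icc_self hx')).mono_of_mem_nhdsWithin
          (Icc_mem_nhdsGT_of_mem ⟨hx'.1.le, hx'.2⟩))
      (huIcc ▸ hτ'_cont)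
      ((h𝔤_cont.sqrt).mono (by rw [huIcc]; exact Set.mapsTo_iff_image_subset.mp hτ_maps))
    simpa [hτ0, hτ1, smul_eq_mul, hc_def] using h
  -- pointwise AM-GM bound
  have hpt : ∀ t ∈ Set.Icc (0:ℝ) 1,
      2 * c * (τ' t * Real.sqrt (𝔤 (τ t))) ≤ 𝔤 (τ t) * (τ' t) ^ 2 + c ^ 2 := by
    intro t ht
    have h1 : (0:ℝ) ≤ 𝔤 (τ t) := (h𝔤_pos _ (hτ_maps ht)).le
    have h2 : 0 ≤ τ' t := hτ'_nonneg t ht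
    have h3 : Real.sqrt (𝔤 (τ t)) ^ 2 = 𝔤 (τ t) := Real.sq_sqrt h1
    nlinarith [sq_nonneg (Real.sqrt (𝔤 (τ t)) * τ' t - c), Real.sqrt_nonneg (𝔤 (τ t))]
  -- integrability of both sides
  have hτsq_cont : ContinuousOn (fun t => 𝔤 (τ t) * (τ' t) ^ 2) (Set.Icc 0 1) :=
    (h𝔤_cont.comp hτ_cont hτ_maps).mul (hτ'_cont.pow 2)
  have hlhs_cont : ContinuousOn (fun t => 2 * c * (τ' t * Real.sqrt (𝔤 (τ t)))) (Set.Icc 0 1) :=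
    continuousOn_const.mul (hτ'_cont.mul ((h𝔤_cont.comp hτ_cont hτ_maps).sqrt))
  have hlhs_int : IntervalIntegrable (fun t => 2 * c * (τ' t * Real.sqrt (𝔤 (τ t)))) volume 0 1 :=
    (huIcc ▸ hlhs_cont).intervalIntegrable
  have hτsq_int : IntervalIntegrable (fun t => 𝔤 (τ t) * (τ' t) ^ 2) volume 0 1 :=
    (huIcc ▸ hτsq_cont).intervalIntegrable
  have hrhs_int : IntervalIntegrable (fun t => 𝔤 (τ t) * (τ' t) ^ 2 + c ^ 2) volume 0 1 :=
    hτsq_int.add (intervalIntegrable_const)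
  have hmono := intervalIntegral.integral_mono_on h01 hlhs_int hrhs_int hpt
  have hL : (∫ t in (0:ℝ)..1, 2 * c * (τ' t * Real.sqrt (𝔤 (τ t)))) = 2 * c * c := by
    rw [intervalIntegral.integral_const_mul, hCoV]
  have hR : (∫ t in (0:ℝ)..1, (𝔤 (τ t) * (τ' t) ^ 2 + c ^ 2))
      = (∫ t in (0:ℝ)..1, 𝔤 (τ t) * (τ' t) ^ 2) + c ^ 2 := by
    rw [intervalIntegral.integral_add hτsq_int intervalIntegrable_const]
    simp
  rw [hL, hR] at hmono
  rw [hJstar]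
  nlinarith [hmono]
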